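/- For every n ≥ 3 and any three distinct vectors a, b, f ∈ V_n with Q_0(a) = Q_0(b), there exists a linear automorphism g of V_n preserving the symplectic form such that g fixes H_f setwise, g(H_a) = H_b, and g(H_b) = H_a. -/
import Mathlib


/-- The symplectic vector space `V_n = (ZMod 2)^(2n)` of the n-qubit real Pauli group. -/
abbrev V (n : ℕ) : Type := Fin (2 * n) → ZMod 2

/-- The index `2i-1` (0-based: `2i`). -/
def i0 {n : ℕ} (i : Fin n) : Fin (2 * n) := ⟨2 * i.1, by have := i.isLt; omega⟩

/-- The index `2i` (0-based: `2i+1`). -/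
def i1 {n : ℕ} (i : Fin n) : Fin (2 * n) := ⟨2 * i.1 + 1, by have := i.isLt; omega⟩

/-- The symplectic form `⟨x,y⟩ = Σ_{i=1}^n (x_{2i−1} y_{2i} + x_{2i} y_{2i−1})`. -/
def sform {n : ℕ} (x y : V n) : ZMod 2 :=
  ∑ i : Fin n, (x (i0 i) * y (i1 i) + x (i1 i) * y (i0 i))

/-- The point set `P = V_n \ {0}` of the incidence geometry `G_n`. -/
def P (n : ℕ) : Set (V n) := {x | x ≠ 0}

/-- The line set `L = {{a,b,a+b} : a,b ∈ P, a ≠ b, ⟨a,b⟩ = 0}` of `G_n`. -/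
def Lines (n : ℕ) : Set (Set (V n)) :=
  {l | ∃ a b : V n, a ∈ P n ∧ b ∈ P n ∧ a ≠ b ∧ sform a b = 0 ∧ l = {a, b, a + b}}

/-- A subset `H ⊆ P` satisfies condition (H1) if every line meets it in exactly
one point or is contained in it. -/
def IsH1 {n : ℕ} (H : Set (V n)) : Prop :=
  H ⊆ P n ∧ ∀ l ∈ Lines n, (H ∩ l).ncard = 1 ∨ l ⊆ H

/-- A geometric hyperplane: a subset satisfying (H1) which is not the full point set. -/
def IsHyperplane {n : ℕ} (H : Set (V n)) : Prop := IsH1 H ∧ H ≠ P n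

/-- `A ⊞ B`: the complement in `P` of the symmetric difference of `A` and `B`. -/
def boxAdd {n : ℕ} (A B : Set (V n)) : Set (V n) := P n \ (symmDiff A B)

/-- The quadratic form `Q_0(x) = Σ_{i=1}^n x_{2i−1} x_{2i}`. -/
def Q0 {n : ℕ} (x : V n) : ZMod 2 := ∑ i : Fin n, x (i0 i) * x (i1 i)

/-- The quadratic form `Q_p(x) = Q_0(x) + ⟨p,x⟩`. -/
def Qf {n : ℕ} (p x : V n) : ZMod 2 := Q0 x + sform p x

/-- The perp-set hyperplane `C_p = {x ∈ P : ⟨p,x⟩ = 0}`. -/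
def Cset {n : ℕ} (p : V n) : Set (V n) := {x ∈ P n | sform p x = 0}

/-- The quadric hyperplane `H_p = {x ∈ P : Q_p(x) = 0}`. -/
def Hset {n : ℕ} (p : V n) : Set (V n) := {x ∈ P n | Qf p x = 0}

/-- The symplectic transvection `t_p : x ↦ x + ⟨p,x⟩·p`. -/
def tv {n : ℕ} (p : V n) (x : V n) : V n := x + sform p x • p


section lemmas
variable {n : ℕ}

lemma z2_add_self (c : ZMod 2) : c + c = 0 := by revert c; decide
lemma z2_mul_self (c : ZMod 2) : c * c = c := by revert c; decide
lemma z2_ne_one (c : ZMod 2) (h : c ≠ 1) : c = 0 := by revert c; decide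
lemma z2_eq_zero_or_one (c : ZMod 2) : c = 0 ∨ c = 1 := by revert c; decide

lemma vadd_self (x : V n) : x + x = 0 :=
  funext fun j => z2_add_self (x j)

lemma sform_comm (x y : V n) : sform x y = sform y x := by
  unfold sform; apply Finset.sum_congr rfl; intros; ring

lemma sform_self (x : V n) : sform x x = 0 := by
  unfold sform
  apply Finset.sum_eq_zero; intro i _
  rw [mul_comm]; exact z2_add_self _

lemma sform_add_left (x y z : V n) : sform (x + y) z = sform x z + sform y z := by
  unfold sform; rw [← Finset.sum_add_distrib]
  apply Finset.sum_congr rfl; intros; simp [Pi.add_apply]; ring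

lemma sform_add_right (x y z : V n) : sform x (y + z) = sform x y + sform x z := by
  rw [sform_comm, sform_add_left, sform_comm y x, sform_comm z x]

lemma sform_smul_left (c : ZMod 2) (x y : V n) : sform (c • x) y = c * sform x y := by
  unfold sform; rw [Finset.mul_sum]
  apply Finset.sum_congr rfl; intros; simp [Pi.smul_apply, smul_eq_mul]; ring

lemma sform_smul_right (c : ZMod 2) (x y : V n) : sform x (c • y) = c * sform x y := by
  rw [sform_comm, sform_smul_left, sform_comm]

lemma sform_zero_right (x : V n) : sform x 0 = 0 := by
  have := sform_smul_right (0 : ZMod 2) x 0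
  simpa using this

lemma Q0_add (x y : V n) : Q0 (x + y) = Q0 x + Q0 y + sform x y := by
  unfold Q0 sform; rw [← Finset.sum_add_distrib, ← Finset.sum_add_distrib]
  apply Finset.sum_congr rfl; intros; simp [Pi.add_apply]; ring

lemma Q0_smul (c : ZMod 2) (x : V n) : Q0 (c • x) = c * Q0 x := by
  unfold Q0; rw [Finset.mul_sum]
  apply Finset.sum_congr rfl; intro i _
  simp only [Pi.smul_apply, smul_eq_mul]
  rw [show c * x (i0 i) * (c * x (i1 i)) = c * c * (x (i0 i) * x (i1 i)) by ring,
    z2_mul_self]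

lemma Qf_add_right (c x y : V n) : Qf c (x + y) = Qf c x + Qf c y + sform x y := by
  unfold Qf; rw [Q0_add, sform_add_right]; ring

lemma Qf_add_left (c d x : V n) : Qf (c + d) x = Qf c x + sform d x := by
  unfold Qf; rw [sform_add_left]; ring

/-- the transvection as a linear map -/
def tvL (p : V n) : V n →ₗ[ZMod 2] V n where
  toFun := tv p
  map_add' x y := by
    unfold tv; rw [sform_add_right, add_smul]; abel
  map_smul' c x := by
    show tv p (c • x) = c • tv p x
    unfold tv
    rw [sform_smul_right, mul_smul, smul_add]

lemma tv_involutive (p : V n) : Function.Involutive (tv p) := by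
  intro x
  unfold tv
  rw [sform_add_right, sform_smul_right, sform_self, mul_zero, add_zero,
    add_assoc, ← add_smul, z2_add_self, zero_smul, add_zero]

/-- the transvection as a linear equivalence -/
def tvE (p : V n) : V n ≃ₗ[ZMod 2] V n :=
  LinearEquiv.ofInvolutive (tvL p) (tv_involutive p)

lemma tvE_coe (p : V n) : ⇑(tvE p) = tv p := rfl

lemma sform_tv (p x y : V n) : sform (tv p x) (tv p y) = sform x y := by
  unfold tv
  simp only [sform_add_left, sform_add_right, sform_smul_left, sform_smul_right,
    sform_self, mul_zero, add_zero]
  rw [sform_comm x p]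
  generalize sform p x = s
  generalize sform p y = t
  generalize sform x y = q
  revert s t q; decide

lemma Qf_tv (c p x : V n) :
    Qf (c + (Qf c p + 1) • p) (tv p x) = Qf c x := by
  unfold Qf tv
  rw [Q0_add, Q0_smul]
  simp only [sform_add_left, sform_add_right, sform_smul_left, sform_smul_right,
    sform_self, mul_zero, add_zero]
  rw [sform_comm x p]
  generalize Q0 x = A
  generalize Q0 p = B
  generalize sform p x = s
  generalize sform c x = t
  generalize sform c p = r
  revert A B s t r; decide

lemma tv_ne_zero (p : V n) {x : V n} (hx : x ≠ 0) : tv p x ≠ 0 := by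
  intro h
  apply hx
  have := tv_involutive p x
  rw [h] at this
  rw [← this]
  show tv p 0 = 0
  unfold tv
  rw [sform_zero_right, zero_smul, add_zero]

lemma tv_image_Hset (p c : V n) :
    tv p '' Hset c = Hset (c + (Qf c p + 1) • p) := by
  ext y
  constructor
  · rintro ⟨x, ⟨hx1, hx2⟩, rfl⟩
    exact ⟨tv_ne_zero p hx1, by rw [Qf_tv]; exact hx2⟩
  · rintro ⟨hy1, hy2⟩
    refine ⟨tv p y, ⟨tv_ne_zero p hy1, ?_⟩, tv_involutive p y⟩
    have := Qf_tv c p (tv p y)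
    rw [tv_involutive p y] at this
    rw [← this]; exact hy2

/-- nondegeneracy of the symplectic form -/
lemma sform_nondeg (x : V n) (h : ∀ y, sform x y = 0) : x = 0 := by
  funext j
  have hj : (∃ i : Fin n, j = i0 i) ∨ (∃ i : Fin n, j = i1 i) := by
    rcases Nat.even_or_odd j.1 with ⟨k, hk⟩ | ⟨k, hk⟩
    · exact Or.inl ⟨⟨k, by omega⟩, by simp [i0, Fin.ext_iff, hk]; omega⟩
    · exact Or.inr ⟨⟨k, by omega⟩, by simp [i1, Fin.ext_iff, hk]⟩
  have key : ∀ i : Fin n, x (i0 i) = 0 ∧ x (i1 i) = 0 := by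
    intro i
    constructor
    · have := h (Pi.single (i1 i) 1)
      rw [sform] at this
      rw [Finset.sum_eq_single i] at this
      · simpa [Pi.single_apply, i0, i1, Fin.ext_iff] using this
      · intro k _ hk
        have h1 : i1 i ≠ i1 k := by simp [i1, Fin.ext_iff]; omega
        have h2 : i1 i ≠ i0 k := by simp [i0, i1, Fin.ext_iff]; omega
        simp [Pi.single_apply, h1.symm, h2.symm]
      · simp
    · have := h (Pi.single (i0 i) 1)
      rw [sform] at this
      rw [Finset.sum_eq_single i] at this
      · simpa [Pi.single_apply, i0, i1, Fin.ext_iff] using this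
      · intro k _ hk
        have h1 : i0 i ≠ i1 k := by simp [i0, i1, Fin.ext_iff]; omega
        have h2 : i0 i ≠ i0 k := by simp [i0, Fin.ext_iff]; omega
        simp [Pi.single_apply, h1.symm, h2.symm]
      · simp
  rcases hj with ⟨i, rfl⟩ | ⟨i, rfl⟩
  · exact (key i).1
  · exact (key i).2

/-- the symplectic form as a bilinear map -/
def sformB : V n →ₗ[ZMod 2] V n →ₗ[ZMod 2] ZMod 2 :=
  LinearMap.mk₂ (ZMod 2) sform sform_add_left sform_smul_left
    sform_add_right sform_smul_right

end lemmas

section exists_w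
variable {n : ℕ}

open Module

lemma step1 (hn : 3 ≤ n) (v1 v2 : V n) :
    ∃ u u' : V n, sform v1 u = 0 ∧ sform v2 u = 0 ∧ sform v1 u' = 0 ∧
      sform v2 u' = 0 ∧ sform u u' = 1 := by
  classical
  set φ : V n →ₗ[ZMod 2] ZMod 2 × ZMod 2 :=
    LinearMap.prod (sformB v1) (sformB v2) with hφ
  set U0 : Submodule (ZMod 2) (V n) := LinearMap.ker φ with hU0
  have memU0 : ∀ w, w ∈ U0 ↔ sform v1 w = 0 ∧ sform v2 w = 0 := by
    intro w
    simp [hU0, hφ, LinearMap.mem_ker, LinearMap.prod_apply, Prod.ext_iff, sformB]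
  by_contra hcon
  push_neg at hcon
  have hzero : ∀ u ∈ U0, ∀ u' ∈ U0, sform u u' = 0 := by
    intro u hu u' hu'
    rcases (memU0 u).1 hu with ⟨h1, h2⟩
    rcases (memU0 u').1 hu' with ⟨h3, h4⟩
    exact z2_ne_one _ (hcon u u' h1 h2 h3 h4)
  -- the map from U0 into the dual annihilator of U0
  set ψ : U0 →ₗ[ZMod 2] Module.Dual (ZMod 2) (V n) :=
    sformB.comp U0.subtype with hψ
  have hψmem : ∀ u : U0, ψ u ∈ U0.dualAnnihilator := by
    intro u
    rw [Submodule.mem_dualAnnihilator]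
    intro w hw
    exact hzero u u.2 w hw
  set ψ' : U0 →ₗ[ZMod 2] U0.dualAnnihilator := LinearMap.codRestrict _ ψ hψmem
  have hinj : Function.Injective ψ' := by
    rw [← LinearMap.ker_eq_bot, LinearMap.ker_eq_bot']
    intro u hu
    have : ψ u = 0 := congrArg Subtype.val hu
    have hu0 : (u : V n) = 0 := by
      apply sform_nondeg
      intro y
      have := congrFun (congrArg DFunLike.coe this) y
      simpa [hψ, sformB] using this
    exact Subtype.ext hu0
  have hVfin : finrank (ZMod 2) (V n) = 2 * n := Module.finrank_fin_fun (ZMod 2)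
  have hdual : finrank (ZMod 2) U0 + finrank (ZMod 2) U0.dualAnnihilator = 2 * n := by
    have h1 : finrank (ZMod 2) U0.dualAnnihilator = finrank (ZMod 2) (V n ⧸ U0) :=
      (LinearEquiv.finrank_eq (Subspace.quotEquivAnnihilator U0)).symm
    have h2 := Submodule.finrank_quotient_add_finrank U0
    omega
  have hle : finrank (ZMod 2) U0 ≤ finrank (ZMod 2) U0.dualAnnihilator :=
    LinearMap.finrank_le_finrank_of_injective (f := ψ') hinj
  have hker : finrank (ZMod 2) (LinearMap.range φ) + finrank (ZMod 2) U0 = 2 * n := by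
    have := LinearMap.finrank_range_add_finrank_ker φ
    rw [hVfin] at this
    exact this
  have hrange : finrank (ZMod 2) (LinearMap.range φ) ≤ 2 := by
    have h1 := Submodule.finrank_le (LinearMap.range φ)
    have h2 : finrank (ZMod 2) (ZMod 2 × ZMod 2) = 2 := by
      simp [Module.finrank_prod]
    omega
  omega

lemma step2 (v1 v2 : V n) (h1 : v1 ≠ 0) (h2 : v2 ≠ 0) (h12 : v1 ≠ v2) :
    ∃ w0 : V n, sform v1 w0 = 0 ∧ sform v2 w0 = 1 := by
  by_contra hcon
  push_neg at hcon
  have hcon' : ∀ w, sform v1 w = 0 → sform v2 w = 0 := by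
    intro w hw
    exact z2_ne_one _ (hcon w hw)
  obtain ⟨y1, hy1⟩ : ∃ y, sform v1 y ≠ 0 := by
    by_contra h
    push_neg at h
    exact h1 (sform_nondeg v1 h)
  have hy1' : sform v1 y1 = 1 := by
    rcases z2_eq_zero_or_one (sform v1 y1) with h | h
    · exact absurd h hy1
    · exact h
  rcases z2_eq_zero_or_one (sform v2 y1) with hc | hc
  · apply h2
    apply sform_nondeg
    intro w
    have hmem : sform v1 (w + sform v1 w • y1) = 0 := by
      rw [sform_add_right, sform_smul_right, hy1', mul_one, z2_add_self]
    have := hcon' _ hmem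
    rw [sform_add_right, sform_smul_right, hc, mul_zero, add_zero] at this
    exact this
  · apply h12
    have : v1 + v2 = 0 := by
      apply sform_nondeg
      intro w
      have hmem : sform v1 (w + sform v1 w • y1) = 0 := by
        rw [sform_add_right, sform_smul_right, hy1', mul_one, z2_add_self]
      have h2' := hcon' _ hmem
      rw [sform_add_right, sform_smul_right, hc, mul_one] at h2'
      rw [sform_add_left]
      -- h2' : sform v2 w + sform v1 w = 0
      have : sform v2 w = sform v1 w := by
        have := z2_eq_zero_or_one (sform v1 w)
        have := z2_eq_zero_or_one (sform v2 w)
        rcases ‹sform v1 w = 0 ∨ sform v1 w = 1› with ha | ha <;>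
          rcases ‹sform v2 w = 0 ∨ sform v2 w = 1› with hb | hb <;>
          rw [ha, hb] at h2' ⊢ <;> first | rfl | (exfalso; revert h2'; decide)
      rw [this, z2_add_self]
    funext j
    have := congrFun this j
    have h0 : v1 j + v2 j = 0 := this
    rcases z2_eq_zero_or_one (v1 j) with ha | ha <;>
      rcases z2_eq_zero_or_one (v2 j) with hb | hb <;>
      rw [ha, hb] at h0 ⊢ <;> first | rfl | (exfalso; revert h0; decide)

lemma exists_w (hn : 3 ≤ n) (v1 v2 a : V n) (h1 : v1 ≠ 0) (h2 : v2 ≠ 0)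
    (h12 : v1 ≠ v2) :
    ∃ w : V n, sform v1 w = 0 ∧ sform v2 w = 1 ∧ Qf a w = 0 := by
  obtain ⟨u, u', hu1, hu2, hu1', hu2', huu⟩ := step1 hn v1 v2
  obtain ⟨w0, hw1, hw2⟩ := step2 v1 v2 h1 h2 h12
  -- candidates w0 + z for z ∈ {0, u, u', u+u'}
  have hlin : ∀ z : V n, sform v1 z = 0 → sform v2 z = 0 →
      sform v1 (w0 + z) = 0 ∧ sform v2 (w0 + z) = 1 := by
    intro z hz1 hz2
    constructor
    · rw [sform_add_right, hw1, hz1, add_zero]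
    · rw [sform_add_right, hw2, hz2, add_zero]
  have hQ : ∀ z : V n, Qf a (w0 + z) = Qf a w0 + (Qf a z + sform w0 z) := by
    intro z
    rw [Qf_add_right]; ring
  set r : V n → ZMod 2 := fun z => Qf a z + sform w0 z with hr
  have hruu : r (u + u') = r u + r u' + 1 := by
    rw [hr]
    simp only
    rw [Qf_add_right, sform_add_right, huu]
    ring
  have hsum : ∃ z : V n, sform v1 z = 0 ∧ sform v2 z = 0 ∧ Qf a w0 + r z = 0 := by
    rcases z2_eq_zero_or_one (Qf a w0) with h0 | h0
    · refine ⟨0, ?_, ?_, ?_⟩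
      · exact sform_zero_right v1
      · exact sform_zero_right v2
      · have : r 0 = 0 := by
          rw [hr]; simp only
          have hQ0 : Qf a 0 = 0 := by
            unfold Qf Q0
            rw [sform_zero_right]
            simp [Pi.zero_apply]
          rw [hQ0, sform_zero_right, add_zero]
        rw [h0, this, add_zero]
    · -- need r z = 1 for some admissible z
      rcases z2_eq_zero_or_one (r u) with h | h
      · rcases z2_eq_zero_or_one (r u') with h' | h'
        · refine ⟨u + u', ?_, ?_, ?_⟩
          · rw [sform_add_right, hu1, hu1', add_zero]
          · rw [sform_add_right, hu2, hu2', add_zero]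
          · rw [h0, hruu, h, h', zero_add, zero_add]; decide
        · exact ⟨u', hu1', hu2', by rw [h0, h']; decide⟩
      · exact ⟨u, hu1, hu2, by rw [h0, h]; decide⟩
  obtain ⟨z, hz1, hz2, hz3⟩ := hsum
  refine ⟨w0 + z, (hlin z hz1 hz2).1, (hlin z hz1 hz2).2, ?_⟩
  rw [hQ z]
  exact hz3

end exists_w

theorem stmt15 (n : ℕ) (hn : 3 ≤ n) (a b f : V n)
    (hab : a ≠ b) (haf : a ≠ f) (hbf : b ≠ f) (hQ : Q0 a = Q0 b) :
    ∃ g : V n ≃ₗ[ZMod 2] V n,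
      (∀ x y : V n, sform (g x) (g y) = sform x y) ∧
      ⇑g '' Hset f = Hset f ∧ ⇑g '' Hset a = Hset b ∧ ⇑g '' Hset b = Hset a := by
  have hadd : ∀ x y : V n, x + y = 0 → x = y := by
    intro x y h
    have h2 : x + (x + y) = y := by rw [← add_assoc, vadd_self, zero_add]
    rw [h, add_zero] at h2
    exact h2
  have h11 : (1 : ZMod 2) + 1 = 0 := by decide
  have hQaa : Qf a a = Q0 a := by unfold Qf; rw [sform_self, add_zero]
  have hQbb : Qf b b = Q0 b := by unfold Qf; rw [sform_self, add_zero]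
  have hpa : Qf a (a + b) = 0 := by
    rw [Qf_add_right, hQaa, hQ]
    unfold Qf
    generalize Q0 b = A
    generalize sform a b = B
    revert A B; decide
  have hpb : Qf b (a + b) = 0 := by
    rw [Qf_add_right, hQbb]
    unfold Qf
    rw [hQ, sform_comm b a]
    generalize Q0 b = A
    generalize sform a b = B
    revert A B; decide
  rcases z2_eq_zero_or_one (Qf f (a + b)) with hpf | hpf
  · -- Case 2 : two transvections
    have hv1 : a + b ≠ 0 := fun h => hab (hadd a b h)
    have hv2 : a + f ≠ 0 := fun h => haf (hadd a f h)
    have hv12 : a + b ≠ a + f := fun h => hbf (by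
      have := congrArg (fun z => a + z) h
      simpa [← add_assoc, vadd_self, zero_add] using this)
    obtain ⟨w, hw1, hw2, hw3⟩ := exists_w hn (a + b) (a + f) a hv1 hv2 hv12
    have hb' : b = a + (a + b) := by rw [← add_assoc, vadd_self, zero_add]
    have hf' : f = a + (a + f) := by rw [← add_assoc, vadd_self, zero_add]
    have hQbw : Qf b w = 0 := by
      rw [hb', Qf_add_left, hw3, hw1, add_zero]
    have hQfw : Qf f w = 1 := by
      rw [hf', Qf_add_left, hw3, hw2, zero_add]
    set u : V n := a + b + w with hu
    have hswu : sform w u = 0 := by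
      rw [hu, sform_add_right, sform_self, add_zero, sform_comm, hw1]
    have hQau : Qf a u = 0 := by
      rw [hu, Qf_add_right, hpa, hw3, hw1, add_zero, add_zero]
    have hQA : Qf (a + w) u = 0 := by
      rw [Qf_add_left, hQau, hswu, add_zero]
    have hQbu : Qf b u = 0 := by
      rw [hu, Qf_add_right, hpb, hQbw, hw1, add_zero, add_zero]
    have hQB : Qf (b + w) u = 0 := by
      rw [Qf_add_left, hQbu, hswu, add_zero]
    have hQF : Qf f u = 1 := by
      rw [hu, Qf_add_right, hpf, hQfw, hw1, zero_add, add_zero]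
    refine ⟨(tvE w).trans (tvE u), ?_, ?_, ?_, ?_⟩
    · intro x y
      show sform (tv u (tv w x)) (tv u (tv w y)) = sform x y
      rw [sform_tv, sform_tv]
    · show (tv u ∘ tv w) '' Hset f = Hset f
      rw [Set.image_comp, tv_image_Hset, hQfw, h11, zero_smul, add_zero,
        tv_image_Hset, hQF, h11, zero_smul, add_zero]
    · show (tv u ∘ tv w) '' Hset a = Hset b
      rw [Set.image_comp, tv_image_Hset, hw3, zero_add, one_smul,
        tv_image_Hset, hQA, zero_add, one_smul]
      have e1 : a + w + (a + b + w) = a + a + (w + w + b) := by abel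
      rw [e1, vadd_self, vadd_self, zero_add, zero_add]
    · show (tv u ∘ tv w) '' Hset b = Hset a
      rw [Set.image_comp, tv_image_Hset, hQbw, zero_add, one_smul,
        tv_image_Hset, hQB, zero_add, one_smul]
      have e1 : b + w + (a + b + w) = b + b + (w + w + a) := by abel
      rw [e1, vadd_self, vadd_self, zero_add, zero_add]
  · -- Case 1 : a single transvection
    refine ⟨tvE (a + b), ?_, ?_, ?_, ?_⟩
    · intro x y
      show sform (tv (a + b) x) (tv (a + b) y) = sform x y
      rw [sform_tv]
    · show tv (a + b) '' Hset f = Hset f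
      rw [tv_image_Hset, hpf, h11, zero_smul, add_zero]
    · show tv (a + b) '' Hset a = Hset b
      rw [tv_image_Hset, hpa, zero_add, one_smul]
      rw [← add_assoc, vadd_self, zero_add]
    · show tv (a + b) '' Hset b = Hset a
      rw [tv_image_Hset, hpb, zero_add, one_smul]
      have e1 : b + (a + b) = b + b + a := by abel
      rw [e1, vadd_self, zero_add]
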